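/- Let d ≥ 2 and let D = {(A_i^{(1)},…,A_i^{(d)})}_{1≤i≤m} be a strong Bollobás system of d-partitions of [n]. Then ∑_{i=1}^m binom(∑_{r=1}^d |A_i^{(r)}|; |A_i^{(1)}|,…,|A_i^{(d)}|)^{-1} ≤ 1. (In particular, the Hegedüs–Frankl conjectured inequality holds for strong Bollobás systems.) -/

import Mathlib

open Finset

section helpers
variable {α : Type*} [LinearOrder α]

lemma rank_ssub {s : Finset α} {a b : α} (ha : a ∈ s) (hab : a < b) :
    s.filter (· < a) ⊂ s.filter (· < b) := by
  constructor
  · intro x hx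
    rw [mem_filter] at hx ⊢
    exact ⟨hx.1, lt_trans hx.2 hab⟩
  · intro hsub
    have := hsub (by rw [mem_filter]; exact ⟨ha, hab⟩)
    rw [mem_filter] at this
    exact lt_irrefl a this.2

/-- In a linearly ordered finset, the rank determines the element. -/
lemma rank_injOn {s : Finset α} {a b : α}
    (ha : a ∈ s) (hb : b ∈ s)
    (h : (s.filter (· < a)).card = (s.filter (· < b)).card) : a = b := by
  rcases lt_trichotomy a b with hlt | he | hgt
  · exact absurd h (Nat.ne_of_lt (Finset.card_lt_card (rank_ssub ha hlt)))
  · exact he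
  · exact absurd h.symm (Nat.ne_of_lt (Finset.card_lt_card (rank_ssub hb hgt)))

lemma orderIsoOfFin_congr {S S' : Finset α} (h : S = S') {t : ℕ}
    (hS : S.card = t) (hS' : S'.card = t) (k : Fin t) :
    (S.orderIsoOfFin hS k : α) = (S'.orderIsoOfFin hS' k : α) := by
  subst h; rfl

end helpers

/-- `choose * multinomial` recursion for `Fin (d+1)`. -/
lemma multinomial_fin_succ {d : ℕ} (a : Fin (d + 1) → ℕ) :
    Nat.multinomial Finset.univ a
      = (a 0 + ∑ r : Fin d, a r.succ).choose (a 0)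
        * Nat.multinomial Finset.univ (fun r : Fin d => a r.succ) := by
  have h0 : (Finset.univ : Finset (Fin (d + 1))) = insert 0 (Finset.univ.image Fin.succ) := by
    ext x
    simp only [mem_univ, mem_insert, mem_image, true_iff, true_and]
    rcases Fin.eq_zero_or_eq_succ x with h | ⟨y, hy⟩
    · exact Or.inl h
    · exact Or.inr ⟨y, hy.symm⟩
  have h1 : (0 : Fin (d+1)) ∉ Finset.univ.image Fin.succ := by
    simp [Fin.succ_ne_zero, eq_comm]
  rw [h0, Nat.multinomial_insert h1]
  rw [Finset.sum_image (fun x _ y _ h => Fin.succ_injective _ h)]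
  congr 1
  rw [Nat.multinomial, Nat.multinomial,
    Finset.sum_image (fun x _ y _ h => Fin.succ_injective _ h),
    Finset.prod_image (fun x _ y _ h => Fin.succ_injective _ h)]

/-- Counting ordered partitions with prescribed part sizes. -/
lemma Fcount {α : Type*} [Fintype α] [DecidableEq α] :
    ∀ (d : ℕ) (s : Finset α) (a : Fin d → ℕ), (∑ r, a r) = s.card →
    ((Finset.univ : Finset (Fin d → Finset α)).filter
      (fun D => (∀ r, D r ⊆ s) ∧ (∀ r, (D r).card = a r)
        ∧ ∀ r r', r ≠ r' → Disjoint (D r) (D r'))).card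
      ≤ Nat.multinomial Finset.univ a := by
  intro d
  induction d with
  | zero =>
    intro s a _
    calc _ ≤ (Finset.univ : Finset (Fin 0 → Finset α)).card := card_le_card (filter_subset _ _)
      _ = 1 := by simp [Finset.card_univ]
      _ ≤ _ := Nat.multinomial_pos _ _
  | succ d ih =>
    intro s a hsum
    set T := ((Finset.univ : Finset (Fin (d+1) → Finset α)).filter
      (fun D => (∀ r, D r ⊆ s) ∧ (∀ r, (D r).card = a r)
        ∧ ∀ r r', r ≠ r' → Disjoint (D r) (D r'))) with hT
    have hfib : T.card = ∑ S ∈ s.powersetCard (a 0), (T.filter (fun D => D 0 = S)).card := by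
      apply Finset.card_eq_sum_card_fiberwise
      intro D hD
      rw [hT, Finset.mem_coe, mem_filter] at hD
      rw [Finset.mem_coe, Finset.mem_powersetCard]
      exact ⟨hD.2.1 0, hD.2.2.1 0⟩
    have hfiber : ∀ S ∈ s.powersetCard (a 0),
        (T.filter (fun D => D 0 = S)).card
          ≤ Nat.multinomial Finset.univ (fun r : Fin d => a r.succ) := by
      intro S hS
      rw [Finset.mem_powersetCard] at hS
      have hsum' : (∑ r : Fin d, a r.succ) = (s \ S).card := by
        rw [Finset.card_sdiff_of_subset hS.1, hS.2, ← hsum, Fin.sum_univ_succ]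
        exact (Nat.add_sub_cancel_left (a 0) _).symm
      refine le_trans ?_ (ih (s \ S) (fun r => a r.succ) hsum')
      apply Finset.card_le_card_of_injOn (fun D => fun r : Fin d => D r.succ)
      · intro D hD
        simp only [Finset.mem_coe, mem_filter] at hD
        obtain ⟨hDT, hD0⟩ := hD
        rw [hT, mem_filter] at hDT
        obtain ⟨-, hsub, hcard, hdisj⟩ := hDT
        rw [Finset.mem_coe, mem_filter]
        refine ⟨mem_univ _, fun r => ?_, fun r => hcard r.succ, fun r r' hne =>
          hdisj r.succ r'.succ (fun h => hne (Fin.succ_injective _ h))⟩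
        intro x hx
        rw [Finset.mem_sdiff]
        refine ⟨hsub r.succ hx, fun hxS => ?_⟩
        have := hdisj r.succ 0 (Fin.succ_ne_zero r)
        rw [← hD0] at hxS
        exact Finset.disjoint_left.mp this hx hxS
      · intro D hD D' hD' h
        simp only [Finset.mem_coe, mem_filter] at hD hD'
        funext r
        rcases Fin.eq_zero_or_eq_succ r with h0 | ⟨y, hy⟩
        · rw [h0, hD.2, hD'.2]
        · rw [hy]; exact congrFun h y
    calc T.card ≤ ∑ _S ∈ s.powersetCard (a 0),
          Nat.multinomial Finset.univ (fun r : Fin d => a r.succ) := by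
          rw [hfib]; exact Finset.sum_le_sum hfiber
      _ = (s.powersetCard (a 0)).card * Nat.multinomial Finset.univ (fun r : Fin d => a r.succ) := by
          rw [Finset.sum_const, smul_eq_mul]
      _ = Nat.multinomial Finset.univ a := by
          rw [Finset.card_powersetCard, multinomial_fin_succ a, ← hsum, Fin.sum_univ_succ]

open Finset

namespace StrongBollobas

variable {N d : ℕ}

def Ublk (B : Fin d → Finset (Fin N)) : Finset (Fin N) := Finset.univ.biUnion B

def blk (B : Fin d → Finset (Fin N)) (x : Fin N) : ℕ :=
  ∑ r : Fin d, if x ∈ B r then (r : ℕ) else 0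

def key (B : Fin d → Finset (Fin N)) (σ : Equiv.Perm (Fin N)) (x : Fin N) : ℕ :=
  blk B x * N + (σ x : ℕ)

def idx (B : Fin d → Finset (Fin N)) (σ : Equiv.Perm (Fin N)) (x : Fin N) : ℕ :=
  ((Ublk B).filter (fun y => key B σ y < key B σ x)).card

def Rset (B : Fin d → Finset (Fin N)) (σ : Equiv.Perm (Fin N)) : Finset (Fin N) :=
  (Ublk B).image σ

lemma Rcard (B : Fin d → Finset (Fin N)) (σ : Equiv.Perm (Fin N)) :
    (Rset B σ).card = (Ublk B).card := Finset.card_image_of_injective _ σ.injective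

noncomputable def Efun (B : Fin d → Finset (Fin N)) (σ : Equiv.Perm (Fin N))
    (k : ℕ) (hk : k < (Ublk B).card) : Fin N :=
  ((Rset B σ).orderIsoOfFin (Rcard B σ) ⟨k, hk⟩ : Fin N)

variable {B : Fin d → Finset (Fin N)} {σ : Equiv.Perm (Fin N)}

lemma mem_Ublk {x : Fin N} {r : Fin d} (hx : x ∈ B r) : x ∈ Ublk B :=
  Finset.mem_biUnion.mpr ⟨r, mem_univ r, hx⟩

lemma blk_eq (hdisj : ∀ r s, r ≠ s → Disjoint (B r) (B s)) {x : Fin N} {r : Fin d}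
    (hx : x ∈ B r) : blk B x = r := by
  rw [blk, Finset.sum_eq_single_of_mem r (mem_univ r)]
  · rw [if_pos hx]
  · intro r' _ hne
    rw [if_neg]
    intro hx'
    exact Finset.disjoint_left.mp (hdisj r' r hne) hx' hx

lemma key_lt_blk {x y : Fin N} (h : blk B x < blk B y) : key B σ x < key B σ y := by
  calc key B σ x < blk B x * N + N := by
        exact Nat.add_lt_add_left (σ x).isLt _
    _ = (blk B x + 1) * N := by ring
    _ ≤ blk B y * N := Nat.mul_le_mul_right _ h
    _ ≤ key B σ y := Nat.le_add_right _ _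

lemma key_lt_eq {x y : Fin N} (h : blk B x = blk B y) (h2 : σ x < σ y) :
    key B σ x < key B σ y := by
  rw [key, key, h]
  exact Nat.add_lt_add_left (Fin.lt_iff_val_lt_val.mp h2) _

lemma key_cases {x y : Fin N} (h : key B σ x < key B σ y) :
    blk B x < blk B y ∨ (blk B x = blk B y ∧ σ x < σ y) := by
  rcases lt_trichotomy (blk B x) (blk B y) with hb | hb | hb
  · exact Or.inl hb
  · refine Or.inr ⟨hb, ?_⟩
    rw [key, key, hb] at h
    exact Fin.lt_iff_val_lt_val.mpr (Nat.lt_of_add_lt_add_left h)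
  · exact absurd (key_lt_blk hb : key B σ y < key B σ x) (Nat.lt_asymm h)

lemma idx_lt {x : Fin N} (hx : x ∈ Ublk B) : idx B σ x < (Ublk B).card := by
  have hsub : (Ublk B).filter (fun y => key B σ y < key B σ x) ⊆ (Ublk B).erase x := by
    intro y hy
    rw [mem_filter] at hy
    refine Finset.mem_erase.mpr ⟨?_, hy.1⟩
    intro hxy
    rw [hxy] at hy
    exact lt_irrefl _ hy.2
  calc idx B σ x ≤ ((Ublk B).erase x).card := Finset.card_le_card hsub
    _ < (Ublk B).card := Finset.card_erase_lt_of_mem hx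

lemma idx_mono {x y : Fin N} (hx : x ∈ Ublk B) (h : key B σ x < key B σ y) :
    idx B σ x < idx B σ y := by
  apply Finset.card_lt_card
  constructor
  · intro z hz
    rw [mem_filter] at hz ⊢
    exact ⟨hz.1, lt_trans hz.2 h⟩
  · intro hsub
    have := hsub (by rw [mem_filter]; exact ⟨hx, h⟩)
    rw [mem_filter] at this
    exact lt_irrefl _ this.2

lemma key_inj {x y : Fin N} (h : key B σ x = key B σ y) : x = y := by
  rcases lt_trichotomy (blk B x) (blk B y) with hb | hb | hb
  · exact absurd h (Nat.ne_of_lt (key_lt_blk hb))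
  · rw [key, key, hb] at h
    exact σ.injective (Fin.val_injective (Nat.add_left_cancel h))
  · exact absurd h.symm (Nat.ne_of_lt (key_lt_blk hb))

lemma idx_inj {x y : Fin N} (hx : x ∈ Ublk B) (hy : y ∈ Ublk B)
    (h : idx B σ x = idx B σ y) : x = y := by
  rcases lt_trichotomy (key B σ x) (key B σ y) with hk | hk | hk
  · exact absurd h (Nat.ne_of_lt (idx_mono hx hk))
  · exact key_inj hk
  · exact absurd h.symm (Nat.ne_of_lt (idx_mono hy hk))

lemma E_mem {k : ℕ} (hk : k < (Ublk B).card) : Efun B σ k hk ∈ Rset B σ :=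
  ((Rset B σ).orderIsoOfFin (Rcard B σ) ⟨k, hk⟩).2

lemma E_lt {k k' : ℕ} (hk : k < (Ublk B).card) (hk' : k' < (Ublk B).card)
    (h : k < k') : Efun B σ k hk < Efun B σ k' hk' := by
  have := ((Rset B σ).orderIsoOfFin (Rcard B σ)).strictMono
    (show (⟨k, hk⟩ : Fin _) < ⟨k', hk'⟩ from h)
  exact this

lemma E_inj {k k' : ℕ} (hk : k < (Ublk B).card) (hk' : k' < (Ublk B).card)
    (h : Efun B σ k hk = Efun B σ k' hk') : k = k' := by
  rcases lt_trichotomy k k' with hkk | hkk | hkk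
  · exact absurd h (ne_of_lt (E_lt hk hk' hkk))
  · exact hkk
  · exact absurd h.symm (ne_of_lt (E_lt hk' hk hkk))

lemma E_surj {z : Fin N} (hz : z ∈ Rset B σ) :
    ∃ (k : ℕ) (hk : k < (Ublk B).card), Efun B σ k hk = z := by
  refine ⟨(((Rset B σ).orderIsoOfFin (Rcard B σ)).symm ⟨z, hz⟩ : Fin _).1,
    (((Rset B σ).orderIsoOfFin (Rcard B σ)).symm ⟨z, hz⟩ : Fin _).2, ?_⟩
  show ((((Rset B σ).orderIsoOfFin (Rcard B σ))
    (((Rset B σ).orderIsoOfFin (Rcard B σ)).symm ⟨z, hz⟩) : {x // x ∈ Rset B σ}) : Fin N) = z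
  rw [OrderIso.apply_symm_apply]

lemma E_congr {σ' : Equiv.Perm (Fin N)} (h : Rset B σ = Rset B σ') {k : ℕ}
    (hk : k < (Ublk B).card) : Efun B σ k hk = Efun B σ' k hk := by
  rw [Efun, Efun]
  exact orderIsoOfFin_congr h (Rcard B σ) (Rcard B σ') ⟨k, hk⟩

noncomputable def tfun (B : Fin d → Finset (Fin N)) (σ : Equiv.Perm (Fin N)) (x : Fin N) :
    Fin N :=
  if h : x ∈ Ublk B then Efun B σ (idx B σ x) (idx_lt h) else σ x

lemma tfun_inj : Function.Injective (tfun B σ) := by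
  intro x y h
  rw [tfun, tfun] at h
  by_cases hx : x ∈ Ublk B <;> by_cases hy : y ∈ Ublk B
  · rw [dif_pos hx, dif_pos hy] at h
    exact idx_inj hx hy (E_inj _ _ h)
  · rw [dif_pos hx, dif_neg hy] at h
    exfalso
    have : σ y ∈ Rset B σ := h ▸ E_mem _
    obtain ⟨u, hu, hu2⟩ := Finset.mem_image.mp this
    exact hy (σ.injective hu2 ▸ hu)
  · rw [dif_neg hx, dif_pos hy] at h
    exfalso
    have : σ x ∈ Rset B σ := h ▸ E_mem (σ := σ) _
    obtain ⟨u, hu, hu2⟩ := Finset.mem_image.mp this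
    exact hx (σ.injective hu2 ▸ hu)
  · rw [dif_neg hx, dif_neg hy] at h
    exact σ.injective h

lemma image_tfun : (Ublk B).image (tfun B σ) = Rset B σ := by
  apply Finset.eq_of_subset_of_card_le
  · intro z hz
    obtain ⟨x, hx, rfl⟩ := Finset.mem_image.mp hz
    rw [tfun, dif_pos hx]
    exact E_mem _
  · rw [Rcard, Finset.card_image_of_injective _ tfun_inj]

end StrongBollobas
namespace StrongBollobas

variable {N d : ℕ} {B : Fin d → Finset (Fin N)} {σ : Equiv.Perm (Fin N)}

noncomputable def tperm (B : Fin d → Finset (Fin N)) (σ : Equiv.Perm (Fin N)) :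
    Equiv.Perm (Fin N) :=
  Equiv.ofBijective (tfun B σ) (Finite.injective_iff_bijective.mp tfun_inj)

lemma tperm_apply (x : Fin N) : tperm B σ x = tfun B σ x := rfl

lemma tperm_mem_W (hdisj : ∀ r s, r ≠ s → Disjoint (B r) (B s))
    {r s : Fin d} (hrs : r < s) {x y : Fin N} (hx : x ∈ B r) (hy : y ∈ B s) :
    tperm B σ x < tperm B σ y := by
  rw [tperm_apply, tperm_apply, tfun, tfun, dif_pos (mem_Ublk hx), dif_pos (mem_Ublk hy)]
  apply E_lt
  apply idx_mono (mem_Ublk hx)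
  apply key_lt_blk
  rw [blk_eq hdisj hx, blk_eq hdisj hy]
  exact hrs

lemma E_symm {z : Fin N} (hz : z ∈ Rset B σ) :
    Efun B σ (((Rset B σ).orderIsoOfFin (Rcard B σ)).symm ⟨z, hz⟩ : Fin _).1
      (((Rset B σ).orderIsoOfFin (Rcard B σ)).symm ⟨z, hz⟩ : Fin _).2 = z := by
  show ((((Rset B σ).orderIsoOfFin (Rcard B σ))
    (((Rset B σ).orderIsoOfFin (Rcard B σ)).symm ⟨z, hz⟩) : {w // w ∈ Rset B σ}) : Fin N) = z
  rw [OrderIso.apply_symm_apply]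

lemma E_injFin (σ : Equiv.Perm (Fin N)) {k k' : Fin (Ublk B).card}
    (h : Efun B σ k.1 k.2 = Efun B σ k'.1 k'.2) : k = k' :=
  Fin.ext (E_inj _ _ h)

noncomputable def Dset (B : Fin d → Finset (Fin N)) (σ : Equiv.Perm (Fin N)) (r : Fin d) :
    Finset (Fin (Ublk B).card) :=
  Finset.univ.filter (fun c => Efun B σ c.1 c.2 ∈ (B r).image σ)

lemma mem_Dset {r : Fin d} {c : Fin (Ublk B).card} :
    c ∈ Dset B σ r ↔ Efun B σ c.1 c.2 ∈ (B r).image σ := by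
  rw [Dset, Finset.mem_filter]
  simp

lemma Dset_card (r : Fin d) : (Dset B σ r).card = (B r).card := by
  have h1 : (Dset B σ r).card = ((B r).image σ).card := by
    apply Finset.card_bij (fun c _ => Efun B σ c.1 c.2)
    · intro c hc
      exact mem_Dset.mp hc
    · intro c hc c' hc' h
      exact Fin.ext (E_inj _ _ h)
    · intro z hz
      have hz' : z ∈ Rset B σ := by
        rw [Rset]
        obtain ⟨u, hu, rfl⟩ := Finset.mem_image.mp hz
        exact Finset.mem_image_of_mem _ (mem_Ublk hu)
      obtain ⟨k, hk, hE⟩ := E_surj hz'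
      exact ⟨⟨k, hk⟩, mem_Dset.mpr (hE ▸ hz), hE⟩
  rw [h1, Finset.card_image_of_injective _ σ.injective]

lemma Dset_disj (hdisj : ∀ r s, r ≠ s → Disjoint (B r) (B s)) {r s : Fin d} (hrs : r ≠ s) :
    Disjoint (Dset B σ r) (Dset B σ s) := by
  rw [Finset.disjoint_left]
  intro c hc hc'
  obtain ⟨u, hu, hu2⟩ := Finset.mem_image.mp (mem_Dset.mp hc)
  obtain ⟨v, hv, hv2⟩ := Finset.mem_image.mp (mem_Dset.mp hc')
  have : u = v := σ.injective (by rw [hu2, hv2])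
  exact Finset.disjoint_left.mp (hdisj r s hrs) hu (this ▸ hv)

/-- counting elements of `Dset` below the code of `σ x`. -/
lemma Dset_filter_card {r : Fin d} {x : Fin N} (hx : x ∈ B r)
    {c : Fin (Ublk B).card} (hc : Efun B σ c.1 c.2 = σ x) :
    ((Dset B σ r).filter (· < c)).card = ((B r).filter (fun y => σ y < σ x)).card := by
  apply Finset.card_bij' (fun c' _ => σ.symm (Efun B σ c'.1 c'.2))
    (fun y hy => (((Rset B σ).orderIsoOfFin (Rcard B σ)).symm
      ⟨σ y, Finset.mem_image_of_mem _ (mem_Ublk (Finset.mem_filter.mp hy).1)⟩ : Fin _))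
  case hi =>
    intro c' hc'
    rw [Finset.mem_filter] at hc'
    obtain ⟨hc'1, hc'2⟩ := hc'
    obtain ⟨u, hu, hu2⟩ := Finset.mem_image.mp (mem_Dset.mp hc'1)
    rw [Finset.mem_filter]
    have hσu : σ.symm (Efun B σ c'.1 c'.2) = u := by rw [← hu2, Equiv.symm_apply_apply]
    refine ⟨hσu ▸ hu, ?_⟩
    rw [Equiv.apply_symm_apply, ← hc]
    exact E_lt _ _ hc'2
  case hj =>
    intro y hy
    have hy' := Finset.mem_filter.mp hy
    obtain ⟨hy1, hy2⟩ := hy'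
    have hmem : σ y ∈ Rset B σ := Finset.mem_image_of_mem _ (mem_Ublk hy1)
    have hEk := E_symm hmem
    rw [Finset.mem_filter]
    constructor
    · rw [mem_Dset]
      set k := (((Rset B σ).orderIsoOfFin (Rcard B σ)).symm ⟨σ y, _⟩ : Fin _) with hk
      rw [hEk]
      exact Finset.mem_image_of_mem _ hy1
    · set k := (((Rset B σ).orderIsoOfFin (Rcard B σ)).symm ⟨σ y, _⟩ : Fin _) with hkdef
      show k < c
      rcases lt_trichotomy k c with h | h | h
      · exact h
      · exfalso
        have h2 : Efun B σ k.1 k.2 = Efun B σ c.1 c.2 := by rw [h]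
        rw [hEk, hc] at h2
        exact absurd hy2 (h2 ▸ lt_irrefl _)
      · exfalso
        have h2 := E_lt (σ := σ) c.2 k.2 h
        rw [hEk, hc] at h2
        exact absurd hy2 (lt_asymm h2)
  case left_inv =>
    intro c' hc'
    apply E_injFin σ
    simp only [E_symm, Equiv.apply_symm_apply]
  case right_inv =>
    intro y hy
    have hmem : σ y ∈ Rset B σ := Finset.mem_image_of_mem _ (mem_Ublk (Finset.mem_filter.mp hy).1)
    exact (congrArg σ.symm (E_symm hmem)).trans (σ.symm_apply_apply y)

end StrongBollobas
namespace StrongBollobas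

variable {N d : ℕ} {B : Fin d → Finset (Fin N)} {σ : Equiv.Perm (Fin N)}

lemma idx_eq (hdisj : ∀ r s, r ≠ s → Disjoint (B r) (B s)) {r : Fin d} {x : Fin N}
    (hx : x ∈ B r) :
    idx B σ x = ((Ublk B).filter (fun y => blk B y < (r : ℕ))).card
      + ((B r).filter (fun y => σ y < σ x)).card := by
  rw [idx]
  have h1 : (Ublk B).filter (fun y => key B σ y < key B σ x)
      = (Ublk B).filter (fun y => blk B y < (r : ℕ)) ∪ (B r).filter (fun y => σ y < σ x) := by
    ext y
    simp only [Finset.mem_union, Finset.mem_filter]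
    constructor
    · rintro ⟨hyU, hk⟩
      rcases key_cases hk with h | ⟨hbe, hσ⟩
      · exact Or.inl ⟨hyU, by rw [← blk_eq hdisj hx]; exact h⟩
      · obtain ⟨s, -, hys⟩ := Finset.mem_biUnion.mp hyU
        have hsr : (s : ℕ) = (r : ℕ) := by rw [← blk_eq hdisj hys, hbe, blk_eq hdisj hx]
        have hsr' : s = r := Fin.ext hsr
        exact Or.inr ⟨hsr' ▸ hys, hσ⟩
    · rintro (⟨hyU, hb⟩ | ⟨hyB, hσ⟩)
      · exact ⟨hyU, key_lt_blk (by rw [blk_eq hdisj hx]; exact hb)⟩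
      · exact ⟨mem_Ublk hyB, key_lt_eq (by rw [blk_eq hdisj hyB, blk_eq hdisj hx]) hσ⟩
  rw [h1, Finset.card_union_of_disjoint]
  rw [Finset.disjoint_left]
  intro y hy hy'
  rw [Finset.mem_filter] at hy hy'
  have : blk B y = (r : ℕ) := blk_eq hdisj hy'.1
  rw [this] at hy
  exact lt_irrefl _ hy.2

theorem key_count (N d : ℕ) (B : Fin d → Finset (Fin N))
    (hdisj : ∀ r s, r ≠ s → Disjoint (B r) (B s)) :
    Nat.factorial N ≤ ((Finset.univ : Finset (Equiv.Perm (Fin N))).filter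
      (fun σ => ∀ r s : Fin d, r < s → ∀ x ∈ B r, ∀ y ∈ B s, σ x < σ y)).card
      * Nat.multinomial Finset.univ (fun r => (B r).card) := by
  classical
  set W := ((Finset.univ : Finset (Equiv.Perm (Fin N))).filter
    (fun σ => ∀ r s : Fin d, r < s → ∀ x ∈ B r, ∀ y ∈ B s, σ x < σ y)) with hW
  set F := ((Finset.univ : Finset (Fin d → Finset (Fin (Ublk B).card))).filter
    (fun D => (∀ r, D r ⊆ Finset.univ) ∧ (∀ r, (D r).card = (B r).card)
      ∧ ∀ r r', r ≠ r' → Disjoint (D r) (D r'))) with hFdef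
  have hUcard : (∑ r, (B r).card) = (Ublk B).card :=
    (Finset.card_biUnion (fun r _ s _ h => hdisj r s h)).symm
  have hF : F.card ≤ Nat.multinomial Finset.univ (fun r => (B r).card) := by
    have := Fcount (α := Fin (Ublk B).card) d Finset.univ (fun r => (B r).card)
      (by rw [hUcard, Finset.card_univ, Fintype.card_fin])
    exact this
  have hinj : (Finset.univ : Finset (Equiv.Perm (Fin N))).card ≤ (W ×ˢ F).card := by
    apply Finset.card_le_card_of_injOn (fun σ => (tperm B σ, Dset B σ))
    · intro σ _
      rw [Finset.mem_coe, Finset.mem_product]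
      constructor
      · rw [hW, Finset.mem_filter]
        exact ⟨Finset.mem_univ _, fun r s hrs x hx y hy => tperm_mem_W hdisj hrs hx hy⟩
      · rw [hFdef, Finset.mem_filter]
        exact ⟨Finset.mem_univ _, fun r => Finset.subset_univ _, fun r => Dset_card r,
          fun r r' h => Dset_disj hdisj h⟩
    · intro σ _ σ' _ h
      simp only [Prod.mk.injEq] at h
      obtain ⟨hτ, hD⟩ := h
      have hτf : ∀ x, tfun B σ x = tfun B σ' x := by
        intro x
        rw [← tperm_apply, ← tperm_apply, hτ]
      have hR : Rset B σ = Rset B σ' := by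
        rw [← image_tfun (σ := σ), ← image_tfun (σ := σ')]
        exact Finset.image_congr (fun x _ => hτf x)
      apply Equiv.coe_fn_injective
      funext x
      show σ x = σ' x
      by_cases hxU : x ∈ Ublk B
      · obtain ⟨r, -, hx⟩ := Finset.mem_biUnion.mp hxU
        have h1 := hτf x
        rw [tfun, tfun, dif_pos hxU, dif_pos hxU] at h1
        have h1' : Efun B σ (idx B σ x) (idx_lt hxU)
            = Efun B σ (idx B σ' x) (idx_lt (σ := σ') hxU) :=
          h1.trans (E_congr hR (idx_lt (σ := σ') hxU)).symm
        have hidx : idx B σ x = idx B σ' x := E_inj _ _ h1'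
        have hρ : ((B r).filter (fun y => σ y < σ x)).card
            = ((B r).filter (fun y => σ' y < σ' x)).card := by
          have e1 := idx_eq (σ := σ) hdisj hx
          have e2 := idx_eq (σ := σ') hdisj hx
          omega
        have hmemx : σ x ∈ Rset B σ := Finset.mem_image_of_mem _ hxU
        have hmemx' : σ' x ∈ Rset B σ' := Finset.mem_image_of_mem _ hxU
        set c := (((Rset B σ).orderIsoOfFin (Rcard B σ)).symm ⟨σ x, hmemx⟩ : Fin _) with hcdef
        set c' := (((Rset B σ').orderIsoOfFin (Rcard B σ')).symm ⟨σ' x, hmemx'⟩ : Fin _)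
          with hc'def
        have hEc : Efun B σ c.1 c.2 = σ x := E_symm hmemx
        have hEc' : Efun B σ' c'.1 c'.2 = σ' x := E_symm hmemx'
        have hcD : c ∈ Dset B σ r := by
          rw [mem_Dset, hEc]
          exact Finset.mem_image_of_mem _ hx
        have hc'D : c' ∈ Dset B σ r := by
          rw [congrFun hD r, mem_Dset, hEc']
          exact Finset.mem_image_of_mem _ hx
        have count1 := Dset_filter_card (σ := σ) hx hEc
        have count2 := Dset_filter_card (σ := σ') hx hEc'
        rw [← congrFun hD r] at count2
        have hcc' : c = c' := by
          apply rank_injOn hcD hc'D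
          rw [count1, count2, hρ]
        calc σ x = Efun B σ c.1 c.2 := hEc.symm
          _ = Efun B σ' c.1 c.2 := E_congr hR c.2
          _ = Efun B σ' c'.1 c'.2 := by rw [hcc']
          _ = σ' x := hEc'
      · have h1 := hτf x
        rw [tfun, tfun, dif_neg hxU, dif_neg hxU] at h1
        exact h1
  calc Nat.factorial N = Fintype.card (Equiv.Perm (Fin N)) := by
        rw [Fintype.card_perm, Fintype.card_fin]
    _ = (Finset.univ : Finset (Equiv.Perm (Fin N))).card := (Finset.card_univ).symm
    _ ≤ (W ×ˢ F).card := hinj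
    _ = W.card * F.card := Finset.card_product _ _
    _ ≤ W.card * Nat.multinomial Finset.univ (fun r => (B r).card) :=
        Nat.mul_le_mul_left _ hF

end StrongBollobas
/-- **Theorem (the Hegedüs–Frankl conjecture holds for strong Bollobás systems).**
If `{(A_i^{(1)}, …, A_i^{(d)})}_{1 ≤ i ≤ m}` is a strong Bollobás system of
`d`-partitions of `[n]` with `d ≥ 2`, then
`∑_i multinomial(|A_i^{(1)}|, …, |A_i^{(d)}|)⁻¹ ≤ 1`. -/
theorem strong_bollobas_weighted_bound (n d m : ℕ) (hd : 2 ≤ d)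
    (A : Fin m → Fin d → Finset ℕ)
    (hAsub : ∀ i r, A i r ⊆ Finset.Icc 1 n)
    (hAdisj : ∀ i, ∀ p q : Fin d, p ≠ q → Disjoint (A i p) (A i q))
    (hstrong : ∀ i j : Fin m, i < j →
      ∃ u₁ u₂ v₁ v₂ : Fin d, u₁ < u₂ ∧ v₁ < v₂ ∧
        ((A i u₁) ∩ (A j v₂)).Nonempty ∧ ((A i u₂) ∩ (A j v₁)).Nonempty) :
    ∑ i : Fin m,
        ((Nat.multinomial Finset.univ fun r : Fin d => (A i r).card : ℕ) : ℚ)⁻¹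
      ≤ 1 := by
  classical
  have hBlt : ∀ i r, ∀ x ∈ A i r, x < n + 1 := fun i r x hx =>
    Nat.lt_succ_of_le (Finset.mem_Icc.mp (hAsub i r hx)).2
  set B : Fin m → Fin d → Finset (Fin (n + 1)) :=
    fun i r => (A i r).attachFin (hBlt i r) with hB
  have hBdisj : ∀ i, ∀ r s : Fin d, r ≠ s → Disjoint (B i r) (B i s) := by
    intro i r s hrs
    rw [Finset.disjoint_left]
    intro a ha ha'
    rw [hB, Finset.mem_attachFin] at ha ha'
    exact Finset.disjoint_left.mp (hAdisj i r s hrs) ha ha'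
  set W : Fin m → Finset (Equiv.Perm (Fin (n + 1))) := fun i =>
    (Finset.univ.filter
      (fun σ => ∀ r s : Fin d, r < s → ∀ x ∈ B i r, ∀ y ∈ B i s, σ x < σ y)) with hWdef
  have hkey : ∀ i, Nat.factorial (n + 1)
      ≤ (W i).card * Nat.multinomial Finset.univ (fun r => (A i r).card) := by
    intro i
    have h := StrongBollobas.key_count (n + 1) d (B i) (hBdisj i)
    have hc : (fun r => ((B i r).card)) = fun r => (A i r).card :=
      funext fun r => by rw [hB]; exact Finset.card_attachFin _ _
    rw [hc] at h
    exact h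
  have hdisjW : ∀ i j : Fin m, i ≠ j → Disjoint (W i) (W j) := by
    have main : ∀ i j : Fin m, i < j → Disjoint (W i) (W j) := by
      intro i j hij
      rw [Finset.disjoint_left]
      intro σ hσi hσj
      simp only [hWdef, Finset.mem_filter] at hσi hσj
      obtain ⟨u₁, u₂, v₁, v₂, hu, hv, ⟨x, hxmem⟩, ⟨y, hymem⟩⟩ := hstrong i j hij
      rw [Finset.mem_inter] at hxmem hymem
      have hxlt : x < n + 1 := hBlt i u₁ x hxmem.1
      have hylt : y < n + 1 := hBlt i u₂ y hymem.1
      have h1 : σ ⟨x, hxlt⟩ < σ ⟨y, hylt⟩ := by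
        apply hσi.2 u₁ u₂ hu
        · rw [hB, Finset.mem_attachFin]; exact hxmem.1
        · rw [hB, Finset.mem_attachFin]; exact hymem.1
      have h2 : σ ⟨y, hylt⟩ < σ ⟨x, hxlt⟩ := by
        apply hσj.2 v₁ v₂ hv
        · rw [hB, Finset.mem_attachFin]; exact hymem.2
        · rw [hB, Finset.mem_attachFin]; exact hxmem.2
      exact absurd h1 (lt_asymm h2)
    intro i j hij
    rcases lt_or_gt_of_ne hij with h | h
    · exact main i j h
    · exact (main j i h).symm
  have hsum : (∑ i, (W i).card) ≤ Nat.factorial (n + 1) := by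
    calc ∑ i, (W i).card = (Finset.univ.biUnion W).card :=
          (Finset.card_biUnion (fun i _ j _ h => hdisjW i j h)).symm
      _ ≤ (Finset.univ : Finset (Equiv.Perm (Fin (n + 1)))).card :=
          Finset.card_le_card (Finset.subset_univ _)
      _ = Nat.factorial (n + 1) := by
          rw [Finset.card_univ, Fintype.card_perm, Fintype.card_fin]
  have hfac : (0 : ℚ) < (Nat.factorial (n + 1) : ℚ) :=
    Nat.cast_pos.mpr (Nat.factorial_pos _)
  calc ∑ i : Fin m, ((Nat.multinomial Finset.univ fun r : Fin d => (A i r).card : ℕ) : ℚ)⁻¹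
      ≤ ∑ i : Fin m, ((W i).card : ℚ) / (Nat.factorial (n + 1) : ℚ) := by
        apply Finset.sum_le_sum
        intro i _
        have hM : (0 : ℚ)
            < ((Nat.multinomial Finset.univ fun r : Fin d => (A i r).card : ℕ) : ℚ) :=
          Nat.cast_pos.mpr (Nat.multinomial_pos _ _)
        rw [inv_eq_one_div, div_le_div_iff₀ hM hfac, one_mul]
        exact_mod_cast hkey i
    _ = (∑ i, ((W i).card : ℚ)) / (Nat.factorial (n + 1) : ℚ) := by rw [Finset.sum_div]
    _ ≤ 1 := by
        rw [div_le_one hfac]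
        exact_mod_cast hsum
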